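/- Let r_1 ≥ r_2 ≥ ... ≥ r_n > 0 with n ≥ 4, and place v_1 = (0,0,r_1), v_2 = (0,0,−r_2), and v_3, ..., v_n in the plane z = 0 at positions with ‖v_i‖ = r_i forming a convex polygon with the origin in its interior (assuming r_3, ..., r_n are pairwise distinct). Then the convex hull of {v_1, ..., v_n} contains the origin in its interior and each v_i is on its boundary. -/

import Mathlib

noncomputable def pt3 (x y z : ℝ) : EuclideanSpace ℝ (Fin 3) :=
  (WithLp.equiv 2 (Fin 3 → ℝ)).symm ![x, y, z]

noncomputable def pt2 (x y : ℝ) : EuclideanSpace ℝ (Fin 2) :=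
  (WithLp.equiv 2 (Fin 2 → ℝ)).symm ![x, y]

lemma pt3_app (x y z : ℝ) (i : Fin 3) : pt3 x y z i = ![x, y, z] i := rfl
lemma pt2_app (x y : ℝ) (i : Fin 2) : pt2 x y i = ![x, y] i := rfl

lemma e3_ext {p q : EuclideanSpace ℝ (Fin 3)}
    (h0 : p 0 = q 0) (h1 : p 1 = q 1) (h2 : p 2 = q 2) : p = q := by
  ext i; fin_cases i <;> assumption

lemma e2_ext {p q : EuclideanSpace ℝ (Fin 2)}
    (h0 : p 0 = q 0) (h1 : p 1 = q 1) : p = q := by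
  ext i; fin_cases i <;> assumption

lemma coord_le_norm3 (p : EuclideanSpace ℝ (Fin 3)) (i : Fin 3) : |p i| ≤ ‖p‖ := by
  rw [EuclideanSpace.norm_eq, ← Real.sqrt_sq_eq_abs]
  apply Real.sqrt_le_sqrt
  have : |p i| ^ 2 ≤ ∑ j, ‖p j‖ ^ 2 := by
    have := Finset.single_le_sum (f := fun j => ‖p j‖ ^ 2)
      (fun j _ => by positivity) (Finset.mem_univ i)
    simpa [sq_abs] using this
  simpa [sq_abs] using this

lemma norm_pt2_le (p : EuclideanSpace ℝ (Fin 3)) : ‖pt2 (p 0) (p 1)‖ ≤ ‖p‖ := by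
  rw [EuclideanSpace.norm_eq, EuclideanSpace.norm_eq]
  apply Real.sqrt_le_sqrt
  rw [Fin.sum_univ_two, Fin.sum_univ_three]
  simp only [pt2_app]
  have : (0:ℝ) ≤ ‖p 2‖ ^ 2 := by positivity
  simp only [Matrix.cons_val_zero, Matrix.cons_val_one, Matrix.head_cons]
  linarith

lemma not_mem_interior_of_halfspace {E : Type*} [NormedAddCommGroup E] [NormedSpace ℝ E]
    {s : Set E} {g : E → ℝ} {c : ℝ}
    (hsub : s ⊆ {p | g p ≤ c}) {x d : E} (hd : d ≠ 0)
    (hgl : ∀ t : ℝ, 0 < t → c < g (x + t • d)) : x ∉ interior s := by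
  intro hx
  rw [mem_interior_iff_mem_nhds, Metric.mem_nhds_iff] at hx
  obtain ⟨ε, hε, hball⟩ := hx
  have hdn : 0 < ‖d‖ := norm_pos_iff.2 hd
  set t := ε / (2 * ‖d‖) with ht
  have htpos : 0 < t := div_pos hε (by positivity)
  have hmem : x + t • d ∈ Metric.ball x ε := by
    rw [Metric.mem_ball, dist_eq_norm, add_sub_cancel_left, norm_smul,
      Real.norm_eq_abs, abs_of_pos htpos, ht]
    have h2 : ε / (2 * ‖d‖) * ‖d‖ = ε / 2 := by field_simp
    rw [h2]; linarith
  exact absurd (hsub (hball hmem)) (not_le.2 (hgl t htpos))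

set_option maxHeartbeats 1000000 in
theorem stmt19 (n : ℕ) (hn : 4 ≤ n) (r : Fin n → ℝ) (hanti : Antitone r)
    (hpos : ∀ i, 0 < r i)
    (hdist : ∀ i j : Fin n, 2 ≤ i.val → 2 ≤ j.val → r i = r j → i = j)
    (v : Fin n → EuclideanSpace ℝ (Fin 3))
    (hv0 : v ⟨0, by omega⟩ = pt3 0 0 (r ⟨0, by omega⟩))
    (hv1 : v ⟨1, by omega⟩ = pt3 0 0 (-(r ⟨1, by omega⟩)))
    (hplane : ∀ i : Fin n, 2 ≤ i.val → v i 2 = 0)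
    (hnorm : ∀ i, ‖v i‖ = r i)
    (w : {i : Fin n // 2 ≤ i.val} → EuclideanSpace ℝ (Fin 2))
    (hw : ∀ i : {i : Fin n // 2 ≤ i.val}, w i = pt2 (v i.val 0) (v i.val 1))
    (hwbd : ∀ i, w i ∈ frontier (convexHull ℝ (Set.range w)))
    (hwint : (0 : EuclideanSpace ℝ (Fin 2)) ∈ interior (convexHull ℝ (Set.range w))) :
    (0 : EuclideanSpace ℝ (Fin 3)) ∈ interior (convexHull ℝ (Set.range v)) ∧
      ∀ i, v i ∈ frontier (convexHull ℝ (Set.range v)) := by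
  set K2 := convexHull ℝ (Set.range w) with hK2def
  set K3 := convexHull ℝ (Set.range v) with hK3def
  have hK2conv : Convex ℝ K2 := convex_convexHull ℝ _
  have hK3conv : Convex ℝ K3 := convex_convexHull ℝ _
  have hK3closed : IsClosed K3 := (Set.finite_range v).isClosed_convexHull (𝕜 := ℝ)
  set i0 : Fin n := ⟨0, by omega⟩ with hi0
  set i1 : Fin n := ⟨1, by omega⟩ with hi1
  have hr0 : 0 < r i0 := hpos i0
  have hr1 : 0 < r i1 := hpos i1
  -- coordinates of v i0 and v i1
  have hv00 : v i0 0 = 0 := by rw [hv0]; rfl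
  have hv01 : v i0 1 = 0 := by rw [hv0]; rfl
  have hv02 : v i0 2 = r i0 := by rw [hv0]; rfl
  have hv10 : v i1 0 = 0 := by rw [hv1]; rfl
  have hv11 : v i1 1 = 0 := by rw [hv1]; rfl
  have hv12 : v i1 2 = -(r i1) := by rw [hv1]; rfl
  -- embedding of K2 into K3
  have hemb : ∀ u ∈ K2, pt3 (u 0) (u 1) 0 ∈ K3 := by
    intro u hu
    have hconv : Convex ℝ {u : EuclideanSpace ℝ (Fin 2) | pt3 (u 0) (u 1) 0 ∈ K3} := by
      intro x hx y hy a b ha hb hab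
      have key : pt3 ((a • x + b • y) 0) ((a • x + b • y) 1) 0
          = a • pt3 (x 0) (x 1) 0 + b • pt3 (y 0) (y 1) 0 := by
        apply e3_ext <;>
          simp [pt3_app, PiLp.add_apply, PiLp.smul_apply, smul_eq_mul]
      show pt3 ((a • x + b • y) 0) ((a • x + b • y) 1) 0 ∈ K3
      rw [key]
      exact hK3conv hx hy ha hb hab
    refine convexHull_min ?_ hconv hu
    rintro _ ⟨j, rfl⟩
    have : pt3 (w j 0) (w j 1) 0 = v j.val := by
      apply e3_ext
      · rw [hw j]; rfl
      · rw [hw j]; rfl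
      · rw [pt3_app, hplane j.val j.2]; rfl
    show pt3 (w j 0) (w j 1) 0 ∈ K3
    rw [this]
    exact subset_convexHull ℝ _ (Set.mem_range_self _)
  constructor
  · -- interior claim
    obtain ⟨ε, hε, hball⟩ : ∃ ε > 0, Metric.ball (0 : EuclideanSpace ℝ (Fin 2)) ε ⊆ K2 := by
      rw [mem_interior_iff_mem_nhds] at hwint
      obtain ⟨ε, hε, h⟩ := Metric.mem_nhds_iff.mp hwint
      exact ⟨ε, hε, h⟩
    set δ := min ε (min (r i0) (r i1)) / 2 with hδdef
    have hδ : 0 < δ := by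
      have := lt_min hε (lt_min hr0 hr1)
      positivity
    rw [mem_interior_iff_mem_nhds, Metric.mem_nhds_iff]
    refine ⟨δ, hδ, ?_⟩
    intro p hp
    rw [Metric.mem_ball, dist_zero_right] at hp
    have hz : |p 2| < δ := lt_of_le_of_lt (coord_le_norm3 p 2) hp
    have hxy : ‖pt2 (p 0) (p 1)‖ < δ := lt_of_le_of_lt (norm_pt2_le p) hp
    have hδε : 2 * δ ≤ ε := by
      rw [hδdef]; have := min_le_left ε (min (r i0) (r i1)); linarith
    have hδ0 : 2 * δ ≤ r i0 := by
      rw [hδdef]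
      have h1 := min_le_right ε (min (r i0) (r i1))
      have h2 := min_le_left (r i0) (r i1)
      linarith
    have hδ1 : 2 * δ ≤ r i1 := by
      rw [hδdef]
      have h1 := min_le_right ε (min (r i0) (r i1))
      have h2 := min_le_right (r i0) (r i1)
      linarith
    -- generic combination
    rcases le_or_gt 0 (p 2) with hz0 | hz0
    · set t := p 2 / r i0 with htdef
      have ht0 : 0 ≤ t := div_nonneg hz0 hr0.le
      have ht2 : t ≤ 1/2 := by
        rw [htdef, div_le_iff₀ hr0]
        have : p 2 < δ := lt_of_le_of_lt (le_abs_self _) hz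
        linarith
      have h1t : (0:ℝ) < 1 - t := by linarith
      set q2 : EuclideanSpace ℝ (Fin 2) := (1 - t)⁻¹ • pt2 (p 0) (p 1) with hq2
      have hq2mem : q2 ∈ K2 := by
        apply hball
        rw [Metric.mem_ball, dist_zero_right, hq2, norm_smul, Real.norm_eq_abs,
          abs_of_pos (inv_pos.2 h1t)]
        have hinv : (1 - t)⁻¹ ≤ 2 := by
          rw [inv_le_comm₀ h1t (by norm_num)]
          linarith
        calc (1-t)⁻¹ * ‖pt2 (p 0) (p 1)‖ ≤ 2 * ‖pt2 (p 0) (p 1)‖ := by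
              apply mul_le_mul_of_nonneg_right hinv (norm_nonneg _)
          _ < 2 * δ := by linarith
          _ ≤ ε := hδε
      have hq3 : pt3 (q2 0) (q2 1) 0 ∈ K3 := hemb q2 hq2mem
      have hv0m : v i0 ∈ K3 := subset_convexHull ℝ _ (Set.mem_range_self _)
      have key : p = t • v i0 + (1 - t) • pt3 (q2 0) (q2 1) 0 := by
        apply e3_ext
        · rw [PiLp.add_apply, PiLp.smul_apply, PiLp.smul_apply, hv00, pt3_app]
          show p 0 = t • (0:ℝ) + (1-t) • (q2 0)
          rw [hq2, PiLp.smul_apply]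
          show p 0 = t • (0:ℝ) + (1-t) • ((1-t)⁻¹ • pt2 (p 0) (p 1) 0)
          rw [pt2_app]
          show p 0 = t • (0:ℝ) + (1-t) • ((1-t)⁻¹ • p 0)
          rw [smul_eq_mul, smul_eq_mul, smul_eq_mul]
          field_simp
          ring
        · rw [PiLp.add_apply, PiLp.smul_apply, PiLp.smul_apply, hv01, pt3_app]
          show p 1 = t • (0:ℝ) + (1-t) • (q2 1)
          rw [hq2, PiLp.smul_apply]
          show p 1 = t • (0:ℝ) + (1-t) • ((1-t)⁻¹ • pt2 (p 0) (p 1) 1)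
          rw [pt2_app]
          show p 1 = t • (0:ℝ) + (1-t) • ((1-t)⁻¹ • p 1)
          rw [smul_eq_mul, smul_eq_mul, smul_eq_mul]
          field_simp
          ring
        · rw [PiLp.add_apply, PiLp.smul_apply, PiLp.smul_apply, hv02, pt3_app]
          show p 2 = t • r i0 + (1-t) • (0:ℝ)
          rw [smul_eq_mul, smul_eq_mul, htdef]
          field_simp
          ring
      rw [key]
      exact hK3conv hv0m hq3 ht0 h1t.le (by ring)
    · set t := -(p 2) / r i1 with htdef
      have ht0 : 0 ≤ t := div_nonneg (by linarith) hr1.le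
      have ht2 : t ≤ 1/2 := by
        rw [htdef, div_le_iff₀ hr1]
        have : -(p 2) < δ := lt_of_le_of_lt (neg_le_abs _) hz
        linarith
      have h1t : (0:ℝ) < 1 - t := by linarith
      set q2 : EuclideanSpace ℝ (Fin 2) := (1 - t)⁻¹ • pt2 (p 0) (p 1) with hq2
      have hq2mem : q2 ∈ K2 := by
        apply hball
        rw [Metric.mem_ball, dist_zero_right, hq2, norm_smul, Real.norm_eq_abs,
          abs_of_pos (inv_pos.2 h1t)]
        have hinv : (1 - t)⁻¹ ≤ 2 := by
          rw [inv_le_comm₀ h1t (by norm_num)]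
          linarith
        calc (1-t)⁻¹ * ‖pt2 (p 0) (p 1)‖ ≤ 2 * ‖pt2 (p 0) (p 1)‖ := by
              apply mul_le_mul_of_nonneg_right hinv (norm_nonneg _)
          _ < 2 * δ := by linarith
          _ ≤ ε := hδε
      have hq3 : pt3 (q2 0) (q2 1) 0 ∈ K3 := hemb q2 hq2mem
      have hv1m : v i1 ∈ K3 := subset_convexHull ℝ _ (Set.mem_range_self _)
      have key : p = t • v i1 + (1 - t) • pt3 (q2 0) (q2 1) 0 := by
        apply e3_ext
        · rw [PiLp.add_apply, PiLp.smul_apply, PiLp.smul_apply, hv10, pt3_app]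
          show p 0 = t • (0:ℝ) + (1-t) • (q2 0)
          rw [hq2, PiLp.smul_apply]
          show p 0 = t • (0:ℝ) + (1-t) • ((1-t)⁻¹ • pt2 (p 0) (p 1) 0)
          rw [pt2_app]
          show p 0 = t • (0:ℝ) + (1-t) • ((1-t)⁻¹ • p 0)
          rw [smul_eq_mul, smul_eq_mul, smul_eq_mul]
          field_simp
          ring
        · rw [PiLp.add_apply, PiLp.smul_apply, PiLp.smul_apply, hv11, pt3_app]
          show p 1 = t • (0:ℝ) + (1-t) • (q2 1)
          rw [hq2, PiLp.smul_apply]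
          show p 1 = t • (0:ℝ) + (1-t) • ((1-t)⁻¹ • pt2 (p 0) (p 1) 1)
          rw [pt2_app]
          show p 1 = t • (0:ℝ) + (1-t) • ((1-t)⁻¹ • p 1)
          rw [smul_eq_mul, smul_eq_mul, smul_eq_mul]
          field_simp
          ring
        · rw [PiLp.add_apply, PiLp.smul_apply, PiLp.smul_apply, hv12, pt3_app]
          show p 2 = t • (-(r i1)) + (1-t) • (0:ℝ)
          rw [smul_eq_mul, smul_eq_mul, htdef]
          field_simp
          ring
      rw [key]
      exact hK3conv hv1m hq3 ht0 h1t.le (by ring)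
  · -- boundary claim
    intro i
    rw [hK3closed.frontier_eq]
    refine ⟨subset_convexHull ℝ _ (Set.mem_range_self _), ?_⟩
    rcases Nat.lt_or_ge i.val 2 with hi | hi
    · -- i = 0 or 1
      interval_cases h : i.val
      · have hieq : i = i0 := Fin.ext h
        subst hieq
        refine not_mem_interior_of_halfspace (g := fun p => p 2) (c := r i0)
          (d := pt3 0 0 1) ?_ ?_ ?_
        · apply convexHull_min
          · rintro _ ⟨j, rfl⟩
            show v j 2 ≤ r i0
            rcases Nat.lt_or_ge j.val 2 with hj | hj
            · interval_cases h2 : j.val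
              · have : j = i0 := Fin.ext h2
                rw [this, hv02]
              · have : j = i1 := Fin.ext h2
                rw [this, hv12]; linarith
            · rw [hplane j hj]; linarith
          · intro x hx y hy a b ha hb hab
            show (a • x + b • y) 2 ≤ r i0
            rw [PiLp.add_apply, PiLp.smul_apply, PiLp.smul_apply, smul_eq_mul, smul_eq_mul]
            have hx' : x 2 ≤ r i0 := hx
            have hy' : y 2 ≤ r i0 := hy
            nlinarith
        · intro h
          have h2 : pt3 0 0 1 2 = (0 : EuclideanSpace ℝ (Fin 3)) 2 := by rw [h]
          rw [pt3_app] at h2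
          simp at h2
        · intro t ht
          show r i0 < (v i0 + t • pt3 0 0 1) 2
          rw [PiLp.add_apply, PiLp.smul_apply, hv02, pt3_app]
          show r i0 < r i0 + t • (1:ℝ)
          rw [smul_eq_mul]; linarith
      · have hieq : i = i1 := Fin.ext h
        subst hieq
        refine not_mem_interior_of_halfspace (g := fun p => -(p 2)) (c := r i1)
          (d := pt3 0 0 (-1)) ?_ ?_ ?_
        · apply convexHull_min
          · rintro _ ⟨j, rfl⟩
            show -(v j 2) ≤ r i1
            rcases Nat.lt_or_ge j.val 2 with hj | hj
            · interval_cases h2 : j.val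
              · have : j = i0 := Fin.ext h2
                rw [this, hv02]; linarith
              · have : j = i1 := Fin.ext h2
                rw [this, hv12]; linarith
            · rw [hplane j hj]; linarith
          · intro x hx y hy a b ha hb hab
            show -((a • x + b • y) 2) ≤ r i1
            rw [PiLp.add_apply, PiLp.smul_apply, PiLp.smul_apply, smul_eq_mul, smul_eq_mul]
            have hx' : -(x 2) ≤ r i1 := hx
            have hy' : -(y 2) ≤ r i1 := hy
            nlinarith
        · intro h
          have h2 : pt3 0 0 (-1) 2 = (0 : EuclideanSpace ℝ (Fin 3)) 2 := by rw [h]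
          rw [pt3_app] at h2
          simp at h2
        · intro t ht
          show r i1 < -((v i1 + t • pt3 0 0 (-1)) 2)
          rw [PiLp.add_apply, PiLp.smul_apply, hv12, pt3_app]
          show r i1 < -(-(r i1) + t • (-1:ℝ))
          rw [smul_eq_mul]; linarith
    · -- i.val ≥ 2
      set I : {i : Fin n // 2 ≤ i.val} := ⟨i, hi⟩ with hI
      have hwI : w I ∉ interior K2 := by
        have := hwbd I
        rw [frontier] at this
        exact this.2
      obtain ⟨f, hf⟩ := geometric_hahn_banach_open_point (hK2conv.interior)
        isOpen_interior hwI
      set c := f (w I) with hc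
      have hcpos : 0 < c := by
        have := hf 0 hwint
        rwa [map_zero] at this
      have hle : ∀ u ∈ K2, f u ≤ c := by
        intro u hu
        by_contra hgt
        push_neg at hgt
        have hfu : 0 < f u := lt_trans hcpos hgt
        set s := (f u - c) / (2 * f u) with hs
        have hspos : 0 < s := div_pos (by linarith) (by linarith)
        have hs2 : s < 1/2 := by
          rw [hs, div_lt_iff₀ (by linarith)]
          linarith
        have hmem : (1 - s) • u + s • (0 : EuclideanSpace ℝ (Fin 2)) ∈ interior K2 :=
          hK2conv.combo_self_interior_mem_interior hu hwint (by linarith) hspos (by ring)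
        have := hf _ hmem
        rw [map_add, map_smul, map_smul, map_zero, smul_eq_mul, smul_eq_mul,
          mul_zero, add_zero] at this
        have hsfu : s * f u = (f u - c) / 2 := by
          rw [hs]; field_simp
        nlinarith
      refine not_mem_interior_of_halfspace
        (g := fun p => f (pt2 (p 0) (p 1))) (c := c)
        (d := pt3 (w I 0) (w I 1) 0) ?_ ?_ ?_
      · apply convexHull_min
        · rintro _ ⟨j, rfl⟩
          show f (pt2 (v j 0) (v j 1)) ≤ c
          rcases Nat.lt_or_ge j.val 2 with hj | hj
          · interval_cases h2 : j.val
            · have hje : j = i0 := Fin.ext h2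
              rw [hje, hv00, hv01]
              have : pt2 (0:ℝ) 0 = (0 : EuclideanSpace ℝ (Fin 2)) := by
                apply e2_ext <;> rfl
              rw [this, map_zero]; linarith
            · have hje : j = i1 := Fin.ext h2
              rw [hje, hv10, hv11]
              have : pt2 (0:ℝ) 0 = (0 : EuclideanSpace ℝ (Fin 2)) := by
                apply e2_ext <;> rfl
              rw [this, map_zero]; linarith
          · have : pt2 (v j 0) (v j 1) = w ⟨j, hj⟩ := (hw ⟨j, hj⟩).symm
            rw [this]
            exact hle _ (subset_convexHull ℝ _ (Set.mem_range_self _))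
        · intro x hx y hy a b ha hb hab
          show f (pt2 ((a • x + b • y) 0) ((a • x + b • y) 1)) ≤ c
          have key : pt2 ((a • x + b • y) 0) ((a • x + b • y) 1)
              = a • pt2 (x 0) (x 1) + b • pt2 (y 0) (y 1) := by
            apply e2_ext <;>
              simp [pt2_app, PiLp.add_apply, PiLp.smul_apply, smul_eq_mul]
          rw [key, map_add, map_smul, map_smul, smul_eq_mul, smul_eq_mul]
          have hx' : f (pt2 (x 0) (x 1)) ≤ c := hx
          have hy' : f (pt2 (y 0) (y 1)) ≤ c := hy
          nlinarith
      · intro h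
        have hwz : w I = 0 := by
          apply e2_ext
          · have := congrFun (congrArg (fun (q : EuclideanSpace ℝ (Fin 3)) => (q : Fin 3 → ℝ)) h) 0
            simpa [pt3_app] using this
          · have := congrFun (congrArg (fun (q : EuclideanSpace ℝ (Fin 3)) => (q : Fin 3 → ℝ)) h) 1
            simpa [pt3_app] using this
        rw [hc, hwz, map_zero] at hcpos
        exact lt_irrefl 0 hcpos
      · intro t ht
        show c < f (pt2 ((v i + t • pt3 (w I 0) (w I 1) 0) 0)
          ((v i + t • pt3 (w I 0) (w I 1) 0) 1))
        have key : pt2 ((v i + t • pt3 (w I 0) (w I 1) 0) 0)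
            ((v i + t • pt3 (w I 0) (w I 1) 0) 1) = (1 + t) • w I := by
          apply e2_ext
          · rw [PiLp.smul_apply]
            show (v i + t • pt3 (w I 0) (w I 1) 0) 0 = (1 + t) • w I 0
            rw [PiLp.add_apply, PiLp.smul_apply, pt3_app]
            show v i 0 + t • w I 0 = (1 + t) • w I 0
            have : w I 0 = v i 0 := by rw [hw I]; rfl
            rw [this, smul_eq_mul, smul_eq_mul]; ring
          · rw [PiLp.smul_apply]
            show (v i + t • pt3 (w I 0) (w I 1) 0) 1 = (1 + t) • w I 1
            rw [PiLp.add_apply, PiLp.smul_apply, pt3_app]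
            show v i 1 + t • w I 1 = (1 + t) • w I 1
            have : w I 1 = v i 1 := by rw [hw I]; rfl
            rw [this, smul_eq_mul, smul_eq_mul]; ring
        rw [key, map_smul, smul_eq_mul, ← hc]
        nlinarith
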